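/- There exists a deterministic system and an until (reachability) specification for which the optimal Q-function is identically its maximal value, so that a greedy Q-maximizing policy exists that never satisfies the specification: concretely, on X = A = {0,1} with f(x,a) = a and ψ = F 1_{x=1} (i.e., ⊤ U 1_{x=1}), the optimal value V*(x) = 1 for all x and Q*(x,a) = 1 for all (x,a), yet the constant policy π ≡ 0 yields the trajectory constantly 0 with robustness ρ_{[ψ]} = 0 < V*(x₀). -/
import Mathlib


variable {X A : Type*}

/-- Trajectory of the deterministic system `x_{k+1} = f(x_k, a_k)` from `x0`. -/
def traj (f : X → A → X) (x0 : X) (a : ℕ → A) : ℕ → X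
  | 0 => x0
  | n + 1 => f (traj f x0 a n) (a n)

/-- Robustness of `F p` on an infinite trajectory: `sup_{t ≥ 0} p (x_t)`. -/
noncomputable def evRob (p : X → EReal) (x : ℕ → X) : EReal := ⨆ t : ℕ, p (x t)

/-- Optimal value of `F p` from a state. -/
noncomputable def evV (f : X → A → X) (p : X → EReal) (x0 : X) : EReal :=
  ⨆ a : ℕ → A, evRob p (traj f x0 a)

/-- Prepend an action to an action sequence. -/
def consAct (a : A) (c : ℕ → A) : ℕ → A
  | 0 => a
  | n + 1 => c n

/-- Optimal Q-value of `F p`: apply `a` first, then maximize over continuations. -/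
noncomputable def evQ (f : X → A → X) (p : X → EReal) (x0 : X) (a : A) : EReal :=
  ⨆ c : ℕ → A, evRob p (traj f x0 (consAct a c))

private lemma p_le_one (x : Bool) :
    (if x = true then (1 : EReal) else 0) ≤ 1 := by
  cases x <;> simp

private lemma rob_le_one (x : ℕ → Bool) :
    evRob (fun x => if x = true then (1 : EReal) else 0) x ≤ 1 :=
  iSup_le fun t => p_le_one (x t)

private lemma rob_true (x : ℕ → Bool) (t : ℕ) (h : x t = true) :
    evRob (fun x => if x = true then (1 : EReal) else 0) x = 1 := by
  refine le_antisymm (rob_le_one x) ?_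
  refine le_trans ?_ (le_iSup _ t)
  simp [h]

/-- counterexample. On X = A = Bool with f(x,a) = a and ψ = F 1_{x=1},
the optimal value is identically 1 and the optimal Q-function is identically 1 (so the
constant-0 policy is a greedy Q-maximizer), yet the closed-loop trajectory of the constant-0
policy has robustness 0, strictly below the optimal value. -/
theorem greedy_Q_suboptimal_counterexample :
    (∀ x : Bool, evV (fun (_ : Bool) (a : Bool) => a)
        (fun x => if x = true then (1 : EReal) else 0) x = 1) ∧
    (∀ x a : Bool, evQ (fun (_ : Bool) (a : Bool) => a)
        (fun x => if x = true then (1 : EReal) else 0) x a = 1) ∧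
    evRob (fun x => if x = true then (1 : EReal) else 0)
        (traj (fun (_ : Bool) (a : Bool) => a) false (fun _ => false)) = 0 ∧
    evRob (fun x => if x = true then (1 : EReal) else 0)
        (traj (fun (_ : Bool) (a : Bool) => a) false (fun _ => false)) <
      evV (fun (_ : Bool) (a : Bool) => a)
        (fun x => if x = true then (1 : EReal) else 0) false := by
  have hV : ∀ x : Bool, evV (fun (_ : Bool) (a : Bool) => a)
      (fun x => if x = true then (1 : EReal) else 0) x = 1 := by
    intro x
    refine le_antisymm (iSup_le fun a => rob_le_one _) ?_
    refine le_trans ?_ (le_iSup _ (fun _ => true))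
    rw [rob_true _ 1 rfl]
  have hzero : evRob (fun x => if x = true then (1 : EReal) else 0)
      (traj (fun (_ : Bool) (a : Bool) => a) false (fun _ => false)) = 0 := by
    have htraj : ∀ t, traj (fun (_ : Bool) (a : Bool) => a) false (fun _ => false) t = false := by
      intro t; cases t <;> rfl
    unfold evRob
    simp [htraj]
  refine ⟨hV, ?_, hzero, ?_⟩
  · intro x a
    refine le_antisymm (iSup_le fun c => rob_le_one _) ?_
    refine le_trans ?_ (le_iSup _ (fun _ => true))
    rw [rob_true _ 2 rfl]
  · rw [hzero, hV]; norm_num
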